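/- For every integer m ≥ 2 there exists a constant C > 0 such that for every integer N ≥ 2, the sum over all triples (j₁,j₃,j₄) of nonzero integers with |j₁| ≤ N, |j₃| ≤ N, |j₄| ≤ N and |j₃+j₄| > N, of 1/(|j₁|^{m+1}·|j₃|^{m}·|j₄|) is at most C·(log N)/N. -/

import Mathlib

open Finset

open Finset

lemma aux_sq_sum (n : ℕ) : ∀ A : ℕ, 1 ≤ A → A ≤ n + 1 →
    ∑ a ∈ Icc A n, (1 / (a:ℝ)^2) ≤ 2/(A:ℝ) - 2/((n:ℝ)+1) := by
  induction n with
  | zero =>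
    intro A hA hA2
    interval_cases A
    simp
  | succ n ih =>
    intro A hA hA2
    rcases Nat.lt_or_ge A (n+2) with h | h
    · rw [Finset.sum_Icc_succ_top (by omega)]
      have h2 : A ≤ n + 1 := by omega
      have := ih A hA h2
      have key : (1 / (((n:ℝ)+1))^2) ≤ 2/((n:ℝ)+1) - 2/((n:ℝ)+1+1) := by
        rw [div_sub_div _ _ (by positivity) (by positivity), div_le_div_iff₀ (by positivity) (by positivity)]
        nlinarith [sq_nonneg ((n:ℝ)+1)]
      push_cast
      push_cast at this
      linarith
    · have : A = n + 2 := by omega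
      subst this
      rw [Finset.Icc_eq_empty (by omega)]
      push_cast
      simp only [Finset.sum_empty]
      rw [show ((n:ℝ)+1+1) = (n:ℝ)+2 by ring]
      simp

lemma aux_sq_sum' (A n : ℕ) (hA : 1 ≤ A) : ∑ a ∈ Icc A n, (1 / (a:ℝ)^2) ≤ 2/(A:ℝ) := by
  rcases Nat.lt_or_ge n A with h | h
  · rw [Finset.Icc_eq_empty (by omega)]
    simp only [Finset.sum_empty]
    positivity
  · have := aux_sq_sum n A hA (by omega)
    have h2 : (0:ℝ) ≤ 2/((n:ℝ)+1) := by positivity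
    linarith

lemma aux_harmonic (n : ℕ) : ∑ a ∈ Icc 1 n, (1/(a:ℝ)) ≤ 1 + Real.log n := by
  have h1 := harmonic_le_one_add_log n
  have h2 : ((harmonic n : ℚ) : ℝ) = ∑ a ∈ Icc 1 n, (1/(a:ℝ)) := by
    rw [harmonic_eq_sum_Icc]
    push_cast
    simp [one_div]
  rw [h2] at h1
  exact h1
open Finset

/-- Sum over nonzero integers in [-N,N] of a function of |j| equals twice the sum over [1,N]. -/
lemma aux_int_sum (N : ℕ) (g : ℕ → ℝ) :
    ∑ j ∈ (Icc (-(N:ℤ)) (N:ℤ)).filter (· ≠ 0), g j.natAbs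
      = 2 * ∑ a ∈ Icc 1 N, g a := by
  have hsplit : (Icc (-(N:ℤ)) (N:ℤ)).filter (· ≠ 0)
      = (Icc (1:ℤ) (N:ℤ)) ∪ (Icc (-(N:ℤ)) (-1:ℤ)) := by
    ext j
    simp only [Finset.mem_filter, Finset.mem_Icc, Finset.mem_union, ne_eq]
    omega
  have hdisj : Disjoint (Icc (1:ℤ) (N:ℤ)) (Icc (-(N:ℤ)) (-1:ℤ)) := by
    rw [Finset.disjoint_left]
    intro j hj hj'
    simp only [Finset.mem_Icc] at hj hj'
    omega
  rw [hsplit, Finset.sum_union hdisj]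
  have hpos : ∑ j ∈ Icc (1:ℤ) (N:ℤ), g j.natAbs = ∑ a ∈ Icc 1 N, g a := by
    refine Finset.sum_nbij' (fun j => j.natAbs) (fun a => (a:ℤ)) ?_ ?_ ?_ ?_ ?_
    · intro j hj; simp only [Finset.mem_Icc] at hj ⊢; omega
    · intro a ha; simp only [Finset.mem_Icc] at ha ⊢; omega
    · intro j hj; simp only [Finset.mem_Icc] at hj; omega
    · intro a ha; simp
    · intro j hj; rfl
  have hneg : ∑ j ∈ Icc (-(N:ℤ)) (-1:ℤ), g j.natAbs = ∑ a ∈ Icc 1 N, g a := by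
    refine Finset.sum_nbij' (fun j => j.natAbs) (fun a => -(a:ℤ)) ?_ ?_ ?_ ?_ ?_
    · intro j hj; simp only [Finset.mem_Icc] at hj ⊢; omega
    · intro a ha; simp only [Finset.mem_Icc] at ha ⊢; omega
    · intro j hj; simp only [Finset.mem_Icc] at hj; omega
    · intro a ha; simp
    · intro j hj; rfl
  rw [hpos, hneg]; ring

/-- Reflection of a sum over Icc 1 N. -/
lemma aux_reflect (N : ℕ) (f : ℕ → ℝ) :
    ∑ b ∈ Icc 1 N, f (N + 1 - b) = ∑ b ∈ Icc 1 N, f b := by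
  refine Finset.sum_nbij' (fun b => N + 1 - b) (fun b => N + 1 - b) ?_ ?_ ?_ ?_ ?_
  · intro b hb; simp only [Finset.mem_Icc] at hb ⊢; omega
  · intro b hb; simp only [Finset.mem_Icc] at hb ⊢; omega
  · intro b hb; simp only [Finset.mem_Icc] at hb; omega
  · intro b hb; simp only [Finset.mem_Icc] at hb; omega
  · intro b hb; rfl


noncomputable def auxG (N b c : ℕ) : ℝ := if N + 1 ≤ b + c then 1 / ((b:ℝ)^2 * (c:ℝ)) else 0

lemma auxG_nonneg (N b c : ℕ) : 0 ≤ auxG N b c := by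
  unfold auxG; split <;> positivity

lemma auxV_bound (N : ℕ) (hN : 2 ≤ N) :
    ∑ b ∈ Icc 1 N, ∑ c ∈ Icc 1 N, auxG N b c ≤ 12 * Real.log N / N := by
  have hNR : (2:ℝ) ≤ N := by exact_mod_cast hN
  have hNpos : (0:ℝ) < N := by linarith
  have hlog0 : 0 ≤ Real.log N := Real.log_nonneg (by linarith)
  have hlog1 : (1:ℝ) ≤ 2 * Real.log N := by
    have h1 : Real.log 2 ≤ Real.log N := Real.log_le_log (by norm_num) hNR
    have h2 := Real.log_two_gt_d9
    linarith
  rw [Finset.sum_comm]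
  have step1 : ∀ c ∈ Icc 1 N, ∑ b ∈ Icc 1 N, auxG N b c
      ≤ 2 / ((c:ℝ) * ((N + 1 - c : ℕ):ℝ)) := by
    intro c hc
    simp only [Finset.mem_Icc] at hc
    have hd : 1 ≤ N + 1 - c := by omega
    unfold auxG
    rw [← Finset.sum_filter]
    have hfil : (Icc 1 N).filter (fun b => N + 1 ≤ b + c) = Icc (N + 1 - c) N := by
      ext b; simp only [Finset.mem_filter, Finset.mem_Icc]; omega
    rw [hfil]
    have hc0 : (0:ℝ) < (c:ℝ) := by exact_mod_cast hc.1
    have hd0 : (0:ℝ) < ((N + 1 - c : ℕ):ℝ) := by exact_mod_cast hd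
    have e : ∑ b ∈ Icc (N + 1 - c) N, 1 / ((b:ℝ)^2 * (c:ℝ))
        = (1/(c:ℝ)) * ∑ b ∈ Icc (N + 1 - c) N, 1 / (b:ℝ)^2 := by
      rw [Finset.mul_sum]
      exact Finset.sum_congr rfl fun b _ => by rw [one_div_mul_one_div, mul_comm]
    rw [e]
    have h2 := aux_sq_sum' (N + 1 - c) N hd
    calc (1/(c:ℝ)) * ∑ b ∈ Icc (N + 1 - c) N, 1 / (b:ℝ)^2
        ≤ (1/(c:ℝ)) * (2 / ((N + 1 - c : ℕ):ℝ)) := by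
          apply mul_le_mul_of_nonneg_left h2 (by positivity)
      _ = 2 / ((c:ℝ) * ((N + 1 - c : ℕ):ℝ)) := by
          rw [div_mul_div_comm, one_mul]
  have eq2 : ∀ c ∈ Icc 1 N, 2 / ((c:ℝ) * ((N + 1 - c : ℕ):ℝ))
      = (2/((N:ℝ)+1)) * (1/(c:ℝ) + 1/((N + 1 - c : ℕ):ℝ)) := by
    intro c hc
    simp only [Finset.mem_Icc] at hc
    have hcast : ((N + 1 - c : ℕ):ℝ) = (N:ℝ) + 1 - (c:ℝ) := by
      have : c ≤ N + 1 := by omega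
      push_cast [Nat.cast_sub this]
      ring
    have hc0 : (0:ℝ) < (c:ℝ) := by exact_mod_cast hc.1
    have hd0 : (0:ℝ) < ((N + 1 - c : ℕ):ℝ) := by
      have : 1 ≤ N + 1 - c := by omega
      exact_mod_cast this
    rw [hcast] at hd0 ⊢
    field_simp
    ring
  calc ∑ c ∈ Icc 1 N, ∑ b ∈ Icc 1 N, auxG N b c
      ≤ ∑ c ∈ Icc 1 N, 2 / ((c:ℝ) * ((N + 1 - c : ℕ):ℝ)) := Finset.sum_le_sum step1
    _ = (2/((N:ℝ)+1)) * ((∑ c ∈ Icc 1 N, 1/(c:ℝ)) + ∑ c ∈ Icc 1 N, 1/((N + 1 - c : ℕ):ℝ)) := by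
        rw [Finset.sum_congr rfl eq2, ← Finset.mul_sum, Finset.sum_add_distrib]
    _ = (2/((N:ℝ)+1)) * (2 * ∑ c ∈ Icc 1 N, 1/(c:ℝ)) := by
        rw [aux_reflect N (fun k => 1/(k:ℝ))]; ring
    _ ≤ (2/((N:ℝ)+1)) * (2 * (1 + Real.log N)) := by
        apply mul_le_mul_of_nonneg_left _ (by positivity)
        have := aux_harmonic N
        linarith
    _ ≤ (2/(N:ℝ)) * (6 * Real.log N) := by
        apply mul_le_mul
        · apply div_le_div_of_nonneg_left (by norm_num) hNpos (by linarith)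
        · linarith
        · linarith
        · positivity
    _ = 12 * Real.log N / N := by ring

lemma term_bound (m N : ℕ) (hm : 2 ≤ m) (j₁ j₃ j₄ : ℤ)
    (h₁ : 1 ≤ j₁.natAbs) (h₃ : 1 ≤ j₃.natAbs) (h₄ : 1 ≤ j₄.natAbs) :
    (if (N : ℤ) < |j₃ + j₄| then
       (1 : ℝ) / (|(j₁ : ℝ)| ^ (m + 1) * |(j₃ : ℝ)| ^ m * |(j₄ : ℝ)|) else 0)
    ≤ (1/(j₁.natAbs:ℝ)^2) * auxG N j₃.natAbs j₄.natAbs := by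
  have e1 : |(j₁:ℝ)| = ((j₁.natAbs:ℕ):ℝ) := by rw [Nat.cast_natAbs, Int.cast_abs]
  have e3 : |(j₃:ℝ)| = ((j₃.natAbs:ℕ):ℝ) := by rw [Nat.cast_natAbs, Int.cast_abs]
  have e4 : |(j₄:ℝ)| = ((j₄.natAbs:ℕ):ℝ) := by rw [Nat.cast_natAbs, Int.cast_abs]
  have ha1 : (1:ℝ) ≤ (j₁.natAbs:ℝ) := by exact_mod_cast h₁
  have hb1 : (1:ℝ) ≤ (j₃.natAbs:ℝ) := by exact_mod_cast h₃
  have hc1 : (1:ℝ) ≤ (j₄.natAbs:ℝ) := by exact_mod_cast h₄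
  rw [e1, e3, e4]
  split_ifs with h
  · have hcond : N + 1 ≤ j₃.natAbs + j₄.natAbs := by
      have h5 : |j₃ + j₄| = ((j₃ + j₄).natAbs : ℤ) := Int.abs_eq_natAbs _
      rw [h5] at h
      have h6 := Int.natAbs_add_le j₃ j₄
      omega
    unfold auxG
    rw [if_pos hcond, div_mul_div_comm, one_mul]
    apply one_div_le_one_div_of_le
    · positivity
    · have t1 : ((j₁.natAbs:ℕ):ℝ)^2 ≤ ((j₁.natAbs:ℕ):ℝ)^(m+1) :=
        pow_le_pow_right₀ ha1 (by omega)
      have t2 : ((j₃.natAbs:ℕ):ℝ)^2 ≤ ((j₃.natAbs:ℕ):ℝ)^m :=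
        pow_le_pow_right₀ hb1 hm
      calc ((j₁.natAbs:ℕ):ℝ)^2 * (((j₃.natAbs:ℕ):ℝ)^2 * ((j₄.natAbs:ℕ):ℝ))
          ≤ ((j₁.natAbs:ℕ):ℝ)^(m+1) * (((j₃.natAbs:ℕ):ℝ)^m * ((j₄.natAbs:ℕ):ℝ)) := by
            apply mul_le_mul t1 (mul_le_mul_of_nonneg_right t2 (by linarith)) (by positivity) (by positivity)
        _ = ((j₁.natAbs:ℕ):ℝ)^(m+1) * ((j₃.natAbs:ℕ):ℝ)^m * ((j₄.natAbs:ℕ):ℝ) := by ring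
  · exact mul_nonneg (by positivity) (auxG_nonneg _ _ _)

/-- For every integer `m ≥ 2` there exists `C > 0` such that for every
integer `N ≥ 2`, the sum over all triples `(j₁, j₃, j₄)` of nonzero integers with
`|j₁| ≤ N`, `|j₃| ≤ N`, `|j₄| ≤ N` and `|j₃ + j₄| > N`, of
`1 / (|j₁|^(m+1) · |j₃|^m · |j₄|)` is at most `C · (log N) / N`. -/
theorem stmt_5 (m : ℕ) (hm : 2 ≤ m) :
    ∃ C : ℝ, 0 < C ∧ ∀ N : ℕ, 2 ≤ N →
      ∑ j₁ ∈ (Finset.Icc (-(N : ℤ)) (N : ℤ)).filter (· ≠ 0),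
        ∑ j₃ ∈ (Finset.Icc (-(N : ℤ)) (N : ℤ)).filter (· ≠ 0),
          ∑ j₄ ∈ (Finset.Icc (-(N : ℤ)) (N : ℤ)).filter (· ≠ 0),
            (if (N : ℤ) < |j₃ + j₄| then
               (1 : ℝ) / (|(j₁ : ℝ)| ^ (m + 1) * |(j₃ : ℝ)| ^ m * |(j₄ : ℝ)|) else 0)
        ≤ C * Real.log N / N := by
  refine ⟨192, by norm_num, ?_⟩
  intro N hN
  have hmem : ∀ j ∈ (Finset.Icc (-(N : ℤ)) (N : ℤ)).filter (· ≠ 0), 1 ≤ j.natAbs := by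
    intro j hj
    simp only [Finset.mem_filter, Finset.mem_Icc, ne_eq] at hj
    omega
  have hVnonneg : (0:ℝ) ≤ ∑ b ∈ Icc 1 N, ∑ c ∈ Icc 1 N, auxG N b c :=
    Finset.sum_nonneg fun b _ => Finset.sum_nonneg fun c _ => auxG_nonneg N b c
  calc ∑ j₁ ∈ (Finset.Icc (-(N : ℤ)) (N : ℤ)).filter (· ≠ 0),
        ∑ j₃ ∈ (Finset.Icc (-(N : ℤ)) (N : ℤ)).filter (· ≠ 0),
          ∑ j₄ ∈ (Finset.Icc (-(N : ℤ)) (N : ℤ)).filter (· ≠ 0),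
            (if (N : ℤ) < |j₃ + j₄| then
               (1 : ℝ) / (|(j₁ : ℝ)| ^ (m + 1) * |(j₃ : ℝ)| ^ m * |(j₄ : ℝ)|) else 0)
      ≤ ∑ j₁ ∈ (Finset.Icc (-(N : ℤ)) (N : ℤ)).filter (· ≠ 0),
        ∑ j₃ ∈ (Finset.Icc (-(N : ℤ)) (N : ℤ)).filter (· ≠ 0),
          ∑ j₄ ∈ (Finset.Icc (-(N : ℤ)) (N : ℤ)).filter (· ≠ 0),
            (1/(j₁.natAbs:ℝ)^2) * auxG N j₃.natAbs j₄.natAbs := by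
        refine Finset.sum_le_sum fun j₁ hj₁ => Finset.sum_le_sum fun j₃ hj₃ =>
          Finset.sum_le_sum fun j₄ hj₄ => ?_
        exact term_bound m N hm j₁ j₃ j₄ (hmem _ hj₁) (hmem _ hj₃) (hmem _ hj₄)
    _ = 8 * ∑ a ∈ Icc 1 N, ∑ b ∈ Icc 1 N, ∑ c ∈ Icc 1 N, (1/(a:ℝ)^2) * auxG N b c := by
        have r1 : ∀ (x : ℝ) (y : ℕ),
            ∑ j₄ ∈ (Finset.Icc (-(N : ℤ)) (N : ℤ)).filter (· ≠ 0), x * auxG N y j₄.natAbs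
              = 2 * ∑ c ∈ Icc 1 N, x * auxG N y c :=
          fun x y => aux_int_sum N (fun c => x * auxG N y c)
        simp only [r1]
        have r2 : ∀ (x : ℝ),
            ∑ j₃ ∈ (Finset.Icc (-(N : ℤ)) (N : ℤ)).filter (· ≠ 0),
              (2 * ∑ c ∈ Icc 1 N, x * auxG N j₃.natAbs c)
              = 2 * ∑ b ∈ Icc 1 N, (2 * ∑ c ∈ Icc 1 N, x * auxG N b c) :=
          fun x => aux_int_sum N (fun b => 2 * ∑ c ∈ Icc 1 N, x * auxG N b c)
        simp only [r2]
        rw [aux_int_sum N (fun a => 2 * ∑ b ∈ Icc 1 N, (2 * ∑ c ∈ Icc 1 N, (1/(a:ℝ)^2) * auxG N b c))]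
        simp only [← Finset.mul_sum]
        ring
    _ = 8 * ((∑ a ∈ Icc 1 N, 1/(a:ℝ)^2) * ∑ b ∈ Icc 1 N, ∑ c ∈ Icc 1 N, auxG N b c) := by
        rw [Finset.sum_mul]
        congr 1
        refine Finset.sum_congr rfl fun a _ => ?_
        rw [Finset.mul_sum]
        exact Finset.sum_congr rfl fun b _ => (Finset.mul_sum _ _ _).symm
    _ ≤ 8 * (2 * ∑ b ∈ Icc 1 N, ∑ c ∈ Icc 1 N, auxG N b c) := by
        apply mul_le_mul_of_nonneg_left _ (by norm_num)
        apply mul_le_mul_of_nonneg_right _ hVnonneg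
        have := aux_sq_sum' 1 N le_rfl
        simpa using this
    _ ≤ 8 * (2 * (12 * Real.log N / N)) := by
        apply mul_le_mul_of_nonneg_left _ (by norm_num)
        exact mul_le_mul_of_nonneg_left (auxV_bound N hN) (by norm_num)
    _ = 192 * Real.log N / N := by ring
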